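/- Let d be a positive integer, let μ, Δ ∈ ℝ^d with Δ nonzero, let X and Y be independent random vectors each distributed N(μ, I_d), and let Z be distributed N(μ+Δ, I_d), independent of X and Y. Then P(‖Z − X‖² ≤ ‖Y − X‖²) ≤ exp(−‖Δ‖²/64) + 2·exp(−‖Δ‖⁴/(256·d)). -/

import Mathlib

set_option maxHeartbeats 1000000

open MeasureTheory ProbabilityTheory Real
open scoped ENNReal

/-- The Gaussian distribution `N(μ, v·I_d)` on `ℝ^d` (identity covariance scaled by `v`),
realized as the product of one-dimensional Gaussians. -/
noncomputable def gaussianPi {d : ℕ} (μ : Fin d → ℝ) (v : NNReal) :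
    Measure (Fin d → ℝ) :=
  Measure.pi fun i => gaussianReal (μ i) v

lemma gauss_int {α β : ℝ} (hα : α < 1/2) :
    ∫⁻ x, ENNReal.ofReal (Real.exp (α*x^2 + β*x)) ∂(gaussianReal 0 1)
      = ENNReal.ofReal (Real.exp (β^2/(2*(1-2*α))) / Real.sqrt (1-2*α)) := by
  have hk : 0 < 1/2 - α := by linarith
  set k : ℝ := 1/2 - α with hkdef
  have hint : Integrable (fun x : ℝ => (Real.sqrt (2*π))⁻¹ *
      (Real.exp (β^2/(4*k)) * Real.exp (-k * (x - β/(2*k))^2))) := by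
    apply Integrable.const_mul
    exact ((integrable_exp_neg_mul_sq hk).comp_sub_right (β/(2*k))).const_mul _
  rw [gaussianReal_of_var_ne_zero 0 one_ne_zero,
    lintegral_withDensity_eq_lintegral_mul _ (measurable_gaussianPDF 0 1)
      (by fun_prop)]
  have heq : ∀ x : ℝ, (gaussianPDF 0 1 x * ENNReal.ofReal (Real.exp (α*x^2 + β*x)))
      = ENNReal.ofReal ((Real.sqrt (2*π))⁻¹ *
        (Real.exp (β^2/(4*k)) * Real.exp (-k * (x - β/(2*k))^2))) := by
    intro x
    rw [gaussianPDF, ← ENNReal.ofReal_mul (gaussianPDFReal_nonneg _ _ _)]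
    congr 1
    rw [gaussianPDFReal]
    push_cast
    rw [mul_assoc, ← Real.exp_add, ← Real.exp_add]
    congr 2
    · norm_num
    · field_simp
      ring
  simp_rw [Pi.mul_apply, heq]
  rw [← ofReal_integral_eq_lintegral_ofReal hint
    (Filter.Eventually.of_forall (fun x => by positivity))]
  have h2k : 1 - 2*α = 2*k := by rw [hkdef]; ring
  rw [h2k]
  congr 1
  rw [MeasureTheory.integral_const_mul, MeasureTheory.integral_const_mul, integral_sub_right_eq_self
    (fun x => Real.exp (-k * x^2)) (β/(2*k)), integral_gaussian]
  have h1 : Real.sqrt π ≠ 0 := ne_of_gt (Real.sqrt_pos.2 pi_pos)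
  have h2 : (0:ℝ) < Real.sqrt k := Real.sqrt_pos.2 hk
  have h3 : (0:ℝ) < Real.sqrt 2 := by positivity
  have h4 : 2*(2*k) = 4*k := by ring
  rw [h4, Real.sqrt_mul (by norm_num) π, Real.sqrt_div (le_of_lt pi_pos), Real.sqrt_mul (by norm_num) k]
  field_simp

lemma lintegral_pi_prod : ∀ (n : ℕ) (ν : Fin n → Measure ℝ),
    (∀ i, IsProbabilityMeasure (ν i)) → ∀ (f : Fin n → ℝ → ℝ≥0∞), (∀ i, Measurable (f i)) →
    ∫⁻ x, ∏ i, f i (x i) ∂Measure.pi ν = ∏ i, ∫⁻ t, f i t ∂(ν i) := by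
  intro n
  induction n with
  | zero =>
    intro ν hν f hf
    haveI := hν
    simp
  | succ n ih =>
    intro ν hν f hf
    haveI := hν
    haveI : ∀ j : Fin n, IsProbabilityMeasure ((fun j => ν ((0:Fin (n+1)).succAbove j)) j) :=
      fun j => hν _
    haveI : ∀ j : Fin n, SigmaFinite (ν ((0:Fin (n+1)).succAbove j)) := fun j => inferInstance
    rw [← ((measurePreserving_piFinSuccAbove ν 0).symm).lintegral_comp_emb
      (MeasurableEquiv.measurableEmbedding _)]
    simp_rw [MeasurableEquiv.piFinSuccAbove_symm_apply, Fin.insertNthEquiv,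
      Fin.prod_univ_succ, Fin.insertNth_zero, Equiv.coe_fn_mk, Fin.cons_zero, Fin.cons_succ, Fin.zero_succAbove, cast_eq]
    rw [lintegral_prod_mul (f := f 0) (g := fun y : Fin n → ℝ => ∏ x : Fin n, f x.succ (y x))
      ((hf 0).aemeasurable)
      (Finset.measurable_prod Finset.univ (fun j _ => (hf _).comp (measurable_pi_apply j))).aemeasurable]
    rw [ih _ (fun j => hν _) _ (fun j => hf _)]

lemma coordMGF {a l : ℝ} (hl0 : 0 < l) (hl8 : l ≤ 1/8) :
    ∫⁻ x, ∫⁻ y, ∫⁻ z, ENNReal.ofReal (Real.exp (-(l * ((a + z - x)^2 - (y - x)^2))))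
        ∂(gaussianReal 0 1) ∂(gaussianReal 0 1) ∂(gaussianReal 0 1)
      = ENNReal.ofReal (Real.exp (-(l*(1-4*l)*a^2/(1-12*l^2))) / Real.sqrt (1-12*l^2)) := by
  have hp1 : (0:ℝ) < 1+2*l := by linarith
  have hp2 : (0:ℝ) < 1-2*l := by linarith
  have hp3 : (0:ℝ) < 1-4*l^2 := by nlinarith
  have hp4 : (0:ℝ) < 1-12*l^2 := by nlinarith
  have hs1 : (0:ℝ) < Real.sqrt (1+2*l) := Real.sqrt_pos.2 hp1
  have hs2 : (0:ℝ) < Real.sqrt (1-2*l) := Real.sqrt_pos.2 hp2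
  -- step z
  have hz : ∀ x y : ℝ,
      (∫⁻ z, ENNReal.ofReal (Real.exp (-(l * ((a + z - x)^2 - (y - x)^2)))) ∂(gaussianReal 0 1))
      = ENNReal.ofReal (Real.exp ((-(l*(a-x)^2) + l*(y-x)^2) + (2*l*(a-x))^2/(2*(1+2*l)))
          / Real.sqrt (1+2*l)) := by
    intro x y
    have key : ∀ z : ℝ, ENNReal.ofReal (Real.exp (-(l * ((a + z - x)^2 - (y - x)^2))))
        = ENNReal.ofReal (Real.exp (-(l*(a-x)^2) + l*(y-x)^2))
          * ENNReal.ofReal (Real.exp ((-l)*z^2 + (-(2*l*(a-x)))*z)) := by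
      intro z
      rw [← ENNReal.ofReal_mul (le_of_lt (Real.exp_pos _)), ← Real.exp_add]
      congr 1
      ring
    simp_rw [key]
    rw [lintegral_const_mul _ (by fun_prop), gauss_int (show (-l:ℝ) < 1/2 by linarith),
      ← ENNReal.ofReal_mul (le_of_lt (Real.exp_pos _)), mul_div_assoc', ← Real.exp_add,
      show ((1:ℝ)-2*(-l)) = 1+2*l by ring,
      show (-(2*l*(a-x)))^2 = (2*l*(a-x))^2 by ring]
  simp_rw [hz]
  -- step y
  have hy : ∀ x : ℝ,
      (∫⁻ y, ENNReal.ofReal (Real.exp ((-(l*(a-x)^2) + l*(y-x)^2) + (2*l*(a-x))^2/(2*(1+2*l)))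
          / Real.sqrt (1+2*l)) ∂(gaussianReal 0 1))
      = ENNReal.ofReal (Real.exp ((-(l*(a-x)^2) + l*x^2 + (2*l*(a-x))^2/(2*(1+2*l)))
            + (2*l*x)^2/(2*(1-2*l)))
          / (Real.sqrt (1+2*l) * Real.sqrt (1-2*l))) := by
    intro x
    have key : ∀ y : ℝ, ENNReal.ofReal (Real.exp ((-(l*(a-x)^2) + l*(y-x)^2)
          + (2*l*(a-x))^2/(2*(1+2*l))) / Real.sqrt (1+2*l))
        = ENNReal.ofReal (Real.exp (-(l*(a-x)^2) + l*x^2 + (2*l*(a-x))^2/(2*(1+2*l)))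
            / Real.sqrt (1+2*l))
          * ENNReal.ofReal (Real.exp (l*y^2 + (-(2*l*x))*y)) := by
      intro y
      rw [← ENNReal.ofReal_mul (by positivity), div_mul_eq_mul_div, ← Real.exp_add]
      congr 2
      ring
    simp_rw [key]
    rw [lintegral_const_mul _ (by fun_prop), gauss_int (show (l:ℝ) < 1/2 by linarith),
      ← ENNReal.ofReal_mul (by positivity), div_mul_div_comm, ← Real.exp_add,
      show (-(2*l*x))^2 = (2*l*x)^2 by ring]
  simp_rw [hy]
  -- step x
  have key : ∀ x : ℝ, ENNReal.ofReal (Real.exp ((-(l*(a-x)^2) + l*x^2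
        + (2*l*(a-x))^2/(2*(1+2*l))) + (2*l*x)^2/(2*(1-2*l)))
        / (Real.sqrt (1+2*l) * Real.sqrt (1-2*l)))
      = ENNReal.ofReal (Real.exp (-(l*a^2/(1+2*l)))
          / (Real.sqrt (1+2*l) * Real.sqrt (1-2*l)))
        * ENNReal.ofReal (Real.exp ((4*l^2/(1-4*l^2))*x^2 + (2*a*l/(1+2*l))*x)) := by
    intro x
    rw [← ENNReal.ofReal_mul (by positivity), div_mul_eq_mul_div, ← Real.exp_add]
    congr 3
    rw [show (1:ℝ)-4*l^2 = (1+2*l)*(1-2*l) by ring]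
    have q1 : (1:ℝ) + l*2 ≠ 0 := by linarith
    have q2 : (1:ℝ) - l*2 ≠ 0 := by linarith
    field_simp
    ring
  simp_rw [key]
  have hα3 : 4*l^2/(1-4*l^2) < 1/2 := by
    rw [div_lt_iff₀ hp3]; nlinarith
  rw [lintegral_const_mul _ (by fun_prop), gauss_int hα3,
    ← ENNReal.ofReal_mul (by positivity), div_mul_div_comm, ← Real.exp_add]
  have h2a : 1 - 2*(4*l^2/(1-4*l^2)) = (1-12*l^2)/(1-4*l^2) := by
    field_simp
    ring
  rw [h2a]
  have hsq : Real.sqrt (1+2*l) * Real.sqrt (1-2*l) * Real.sqrt ((1-12*l^2)/(1-4*l^2))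
      = Real.sqrt (1-12*l^2) := by
    rw [← Real.sqrt_mul hp1.le, show (1+2*l)*(1-2*l) = 1-4*l^2 by ring,
      ← Real.sqrt_mul hp3.le, mul_div_cancel₀ _ (ne_of_gt hp3)]
  rw [hsq]
  congr 3
  rw [show (1:ℝ)-4*l^2 = (1+2*l)*(1-2*l) by ring]
  have q1 : (1:ℝ) + l*2 ≠ 0 := by linarith
  have q2 : (1:ℝ) - l*2 ≠ 0 := by linarith
  have q3 : (1:ℝ) - l^2*12 ≠ 0 := by linarith
  field_simp
  ring

lemma sqrt_pow_eq_exp {B : ℝ} (hB : 0 < B) (d : ℕ) :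
    Real.sqrt B ^ d = Real.exp ((d:ℝ) * (Real.log B / 2)) := by
  rw [Real.exp_nat_mul, ← Real.log_sqrt hB.le, Real.exp_log (Real.sqrt_pos.2 hB)]

lemma final_ineq (d : ℕ) (hd : 0 < d) (s : ℝ) (hs : 0 < s) :
    ∃ l : ℝ, 0 < l ∧ l ≤ 1/8 ∧
      Real.exp (-(l*(1-4*l)*s/(1-12*l^2))) / Real.sqrt (1-12*l^2) ^ d
        ≤ Real.exp (-s/64) + 2*Real.exp (-s^2/(256*d)) := by
  have hD : (1:ℝ) ≤ (d:ℝ) := by exact_mod_cast hd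
  have hD0 : (0:ℝ) < (d:ℝ) := by linarith
  rcases le_or_gt s (2*d) with hcase | hcase
  · -- small s : l = s/(48d)
    refine ⟨s/(48*d), by positivity, ?_, ?_⟩
    · rw [div_le_iff₀ (by positivity)]; nlinarith
    · set l : ℝ := s/(48*d) with hldef
      have hl0 : 0 < l := by positivity
      have hl24 : l ≤ 1/24 := by
        rw [hldef, div_le_iff₀ (by positivity)]; nlinarith
      have h12 : 12*l^2 ≤ l/2 := by nlinarith
      have hB : (0:ℝ) < 1-12*l^2 := by nlinarith
      have hB1 : 1-12*l^2 ≤ 1 := by nlinarith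
      have hB47 : (47:ℝ)/48 ≤ 1-12*l^2 := by nlinarith
      rw [sqrt_pow_eq_exp hB, ← Real.exp_sub]
      have hlog : -((d:ℝ) * (Real.log (1-12*l^2) / 2)) ≤ (288/47)*d*l^2 := by
        have h1 : Real.log ((1-12*l^2)⁻¹) ≤ (1-12*l^2)⁻¹ - 1 :=
          Real.log_le_sub_one_of_pos (by positivity)
        rw [Real.log_inv] at h1
        have h2 : (1-12*l^2)⁻¹ - 1 = (12*l^2)/(1-12*l^2) := by field_simp; ring
        rw [h2] at h1
        have h3 : (12*l^2)/(1-12*l^2) ≤ (12*l^2)/(47/48) := by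
          apply div_le_div_of_nonneg_left (by positivity) (by norm_num) hB47
        have h4 : (12*l^2)/((47:ℝ)/48) = (576/47)*l^2 := by ring
        nlinarith
      have hA : -(l*(1-4*l)*s/(1-12*l^2)) ≤ -(5/6*(l*s)) := by
        have h5 : 5/6*(l*s) ≤ l*(1-4*l)*s := by nlinarith
        have hnum : 0 ≤ l*(1-4*l)*s := by nlinarith
        have h6 : l*(1-4*l)*s ≤ l*(1-4*l)*s/(1-12*l^2) := by
          rw [le_div_iff₀ hB]; exact mul_le_of_le_one_right hnum hB1
        linarith
      have hexp : -(l*(1-4*l)*s/(1-12*l^2)) - (d:ℝ) * (Real.log (1-12*l^2) / 2)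
          ≤ -s^2/(256*d) := by
        have h7 : (288/47)*(d:ℝ)*l^2 - 5/6*(l*s) = s^2/(d:ℝ) * (1/376 - 5/288) := by
          rw [hldef]; field_simp; ring
        have h8 : -s^2/(256*(d:ℝ)) = s^2/(d:ℝ) * (-1/256) := by field_simp
        have h9 : s^2/(d:ℝ) * (1/376 - 5/288) ≤ s^2/(d:ℝ) * (-1/256) := by
          apply mul_le_mul_of_nonneg_left (by norm_num) (by positivity)
        linarith
      calc Real.exp (-(l*(1-4*l)*s/(1-12*l^2)) - (d:ℝ) * (Real.log (1-12*l^2) / 2))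
          ≤ Real.exp (-s^2/(256*d)) := Real.exp_le_exp.2 hexp
        _ ≤ 2*Real.exp (-s^2/(256*d)) := by nlinarith [Real.exp_pos (-s^2/(256*(d:ℝ)))]
        _ ≤ _ := le_add_of_nonneg_left (by positivity)
  · -- big s : l = 1/8
    refine ⟨1/8, by norm_num, le_refl _, ?_⟩
    have hB : (0:ℝ) < 1-12*(1/8:ℝ)^2 := by norm_num
    rw [sqrt_pow_eq_exp (by norm_num), ← Real.exp_sub]
    have h1316 : (1:ℝ)-12*(1/8:ℝ)^2 = 13/16 := by norm_num
    rw [h1316]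
    have hlog : -((d:ℝ) * (Real.log (13/16) / 2)) ≤ 3/26*d := by
      have h1 : Real.log (16/13) ≤ 16/13 - 1 := Real.log_le_sub_one_of_pos (by norm_num)
      have h2 : Real.log ((13:ℝ)/16) = - Real.log (16/13) := by
        rw [show ((13:ℝ)/16) = ((16:ℝ)/13)⁻¹ by norm_num, Real.log_inv]
      rw [h2]
      nlinarith
    have hA : -((1/8:ℝ)*(1-4*(1/8))*s/(13/16)) = -(s/13) := by ring
    have hexp : -((1/8:ℝ)*(1-4*(1/8))*s/(13/16)) - (d:ℝ) * (Real.log (13/16) / 2)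
        ≤ -s/64 := by
      rw [hA]; linarith
    calc Real.exp (-((1/8:ℝ)*(1-4*(1/8))*s/(13/16)) - (d:ℝ) * (Real.log (13/16) / 2))
        ≤ Real.exp (-s/64) := Real.exp_le_exp.2 hexp
      _ ≤ _ := le_add_of_nonneg_right (by positivity)

/-- For `Δ ≠ 0`, independent `X, Y ~ N(μ, I_d)` and `Z ~ N(μ+Δ, I_d)` independent of
`(X, Y)`, the mismatch probability satisfies
`P(‖Z−X‖² ≤ ‖Y−X‖²) ≤ exp(−‖Δ‖²/64) + 2·exp(−‖Δ‖⁴/(256·d))`. -/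
theorem mismatch_explicit_bound {Ω : Type*} [MeasurableSpace Ω] (P : Measure Ω)
    [IsProbabilityMeasure P] (d : ℕ) (hd : 0 < d) (μ Δ : Fin d → ℝ) (hΔ : Δ ≠ 0)
    (X Y Z : Ω → Fin d → ℝ)
    (hX : Measurable X) (hY : Measurable Y) (hZ : Measurable Z)
    (hXd : P.map X = gaussianPi μ 1)
    (hYd : P.map Y = gaussianPi μ 1)
    (hZd : P.map Z = gaussianPi (fun i => μ i + Δ i) 1)
    (hXY : IndepFun X Y P)
    (hXYZ : IndepFun (fun ω => (X ω, Y ω)) Z P) :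
    (P {ω | ∑ i, (Z ω i - X ω i) ^ 2 ≤ ∑ i, (Y ω i - X ω i) ^ 2}).toReal
      ≤ Real.exp (-(∑ i, (Δ i) ^ 2) / 64)
        + 2 * Real.exp (-(∑ i, (Δ i) ^ 2) ^ 2 / (256 * d)) := by
  classical
  set s := ∑ i, (Δ i)^2 with hsdef
  have hs : 0 < s := by
    obtain ⟨i, hi⟩ := Function.ne_iff.1 hΔ
    exact Finset.sum_pos' (fun j _ => sq_nonneg _)
      ⟨i, Finset.mem_univ i, lt_of_le_of_ne (sq_nonneg _) (Ne.symm (pow_ne_zero 2 hi))⟩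
  obtain ⟨l, hl0, hl8, hfin⟩ := final_ineq d hd s hs
  haveI hP1 : IsProbabilityMeasure (gaussianPi μ 1) := by
    unfold gaussianPi; infer_instance
  haveI hP2 : IsProbabilityMeasure (gaussianPi (fun i => μ i + Δ i) 1) := by
    unfold gaussianPi; infer_instance
  haveI hP0 : IsProbabilityMeasure (gaussianPi (fun _ : Fin d => (0:ℝ)) 1) := by
    unfold gaussianPi; infer_instance
  set G0 : Measure (Fin d → ℝ) := gaussianPi (fun _ : Fin d => (0:ℝ)) 1 with hG0
  set Q : Measure (((Fin d → ℝ) × (Fin d → ℝ)) × (Fin d → ℝ)) :=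
    ((gaussianPi μ 1).prod (gaussianPi μ 1)).prod (gaussianPi (fun i => μ i + Δ i) 1) with hQdef
  set W : Ω → ((Fin d → ℝ) × (Fin d → ℝ)) × (Fin d → ℝ) := fun ω => ((X ω, Y ω), Z ω) with hWdef
  have hWm : Measurable W := (hX.prodMk hY).prodMk hZ
  have hmap : P.map W = Q := by
    have h1 := (indepFun_iff_map_prod_eq_prod_map_map hX.aemeasurable hY.aemeasurable).mp hXY
    rw [hXd, hYd] at h1
    have h2 := (indepFun_iff_map_prod_eq_prod_map_map (hX.prodMk hY).aemeasurable
      hZ.aemeasurable).mp hXYZ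
    rw [h1, hZd] at h2
    exact h2
  have hsum1 : Measurable fun p : ((Fin d → ℝ) × (Fin d → ℝ)) × (Fin d → ℝ) =>
      ∑ i, (p.2 i - p.1.1 i)^2 := Finset.measurable_sum _ (fun i _ => by fun_prop)
  have hsum2 : Measurable fun p : ((Fin d → ℝ) × (Fin d → ℝ)) × (Fin d → ℝ) =>
      ∑ i, (p.1.2 i - p.1.1 i)^2 := Finset.measurable_sum _ (fun i _ => by fun_prop)
  set S : Set (((Fin d → ℝ) × (Fin d → ℝ)) × (Fin d → ℝ)) :=
    {p | ∑ i, (p.2 i - p.1.1 i)^2 ≤ ∑ i, (p.1.2 i - p.1.1 i)^2} with hSdef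
  have hSm : MeasurableSet S := measurableSet_le hsum1 hsum2
  have hPQ : P {ω | ∑ i, (Z ω i - X ω i) ^ 2 ≤ ∑ i, (Y ω i - X ω i) ^ 2} = Q S := by
    rw [← hmap, Measure.map_apply hWm hSm]
    rfl
  set F : (((Fin d → ℝ) × (Fin d → ℝ)) × (Fin d → ℝ)) → ℝ≥0∞ := fun p =>
    ENNReal.ofReal (Real.exp (-(l * (∑ i, (p.2 i - p.1.1 i)^2
      - ∑ i, (p.1.2 i - p.1.1 i)^2)))) with hFdef
  have hFm : Measurable F :=
    (Real.measurable_exp.comp (((hsum1.sub hsum2).const_mul l).neg)).ennreal_ofReal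
  have hmarkov : Q S ≤ ∫⁻ p, F p ∂Q := by
    rw [← lintegral_indicator_one hSm]
    apply lintegral_mono
    intro p
    by_cases hp : p ∈ S
    · rw [Set.indicator_of_mem hp]
      have h0 : (0:ℝ) ≤ -(l * (∑ i, (p.2 i - p.1.1 i)^2 - ∑ i, (p.1.2 i - p.1.1 i)^2)) := by
        have := hp
        rw [hSdef, Set.mem_setOf_eq] at this
        nlinarith
      calc (1 : ℝ≥0∞) = ENNReal.ofReal 1 := ENNReal.ofReal_one.symm
        _ ≤ F p := by
          rw [hFdef]
          exact ENNReal.ofReal_le_ofReal (Real.one_le_exp h0)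
    · rw [Set.indicator_of_notMem hp]
      exact zero_le
  -- centering
  have hshift : ∀ c : Fin d → ℝ, MeasurePreserving (fun (x : Fin d → ℝ) i => x i + c i)
      G0 (gaussianPi c 1) := by
    intro c
    rw [hG0]
    unfold gaussianPi
    exact measurePreserving_pi _ _ (fun i => ⟨measurable_add_const _, by
      rw [show (fun t : ℝ => t + c i) = (· + c i) from rfl, gaussianReal_map_add_const, zero_add]⟩)
  set φ : (Fin d → ℝ) → (Fin d → ℝ) := fun x i => x i + μ i with hφdef
  set ψ : (Fin d → ℝ) → (Fin d → ℝ) := fun z i => z i + (μ i + Δ i) with hψdef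
  have hφ : MeasurePreserving φ G0 (gaussianPi μ 1) := hshift μ
  have hψ : MeasurePreserving ψ G0 (gaussianPi (fun i => μ i + Δ i) 1) := hshift (fun i => μ i + Δ i)
  have hΦ : MeasurePreserving (Prod.map (Prod.map φ φ) ψ) ((G0.prod G0).prod G0) Q :=
    (hφ.prod hφ).prod hψ
  have hint : ∫⁻ p, F p ∂Q = ∫⁻ p, F (Prod.map (Prod.map φ φ) ψ p) ∂((G0.prod G0).prod G0) :=
    (hΦ.lintegral_comp hFm).symm
  set e : Fin d → ℝ → ℝ → ℝ → ℝ≥0∞ := fun i a b c =>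
    ENNReal.ofReal (Real.exp (-(l * ((Δ i + c - a)^2 - (b - a)^2)))) with hedef
  have hcomp : ∀ p : ((Fin d → ℝ) × (Fin d → ℝ)) × (Fin d → ℝ),
      F (Prod.map (Prod.map φ φ) ψ p) = ∏ i, e i (p.1.1 i) (p.1.2 i) (p.2 i) := by
    intro p
    rw [hFdef]
    simp only [Prod.map_apply']
    have h1 : (∑ i, (ψ p.2 i - φ p.1.1 i)^2 - ∑ i, (φ p.1.2 i - φ p.1.1 i)^2)
        = ∑ i, ((Δ i + p.2 i - p.1.1 i)^2 - (p.1.2 i - p.1.1 i)^2) := by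
      rw [← Finset.sum_sub_distrib]
      refine Finset.sum_congr rfl (fun i _ => ?_)
      simp only [hφdef, hψdef]
      ring
    rw [h1, Finset.mul_sum, ← Finset.sum_neg_distrib, Real.exp_sum,
      ENNReal.ofReal_prod_of_nonneg (fun i _ => (Real.exp_pos _).le)]
  rw [hPQ]
  have hem : ∀ i, Measurable (fun q : (ℝ × ℝ) × ℝ => e i q.1.1 q.1.2 q.2) := by
    intro i
    rw [hedef]
    fun_prop
  have hprod_meas : Measurable (fun p : ((Fin d → ℝ) × (Fin d → ℝ)) × (Fin d → ℝ) =>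
      ∏ i, e i (p.1.1 i) (p.1.2 i) (p.2 i)) := by
    refine Finset.measurable_prod _ (fun i _ => ?_)
    have := hem i
    fun_prop
  have hQint : ∫⁻ p, F p ∂Q
      = ∫⁻ x, ∫⁻ y, ∫⁻ z, ∏ i, e i (x i) (y i) (z i) ∂G0 ∂G0 ∂G0 := by
    rw [hint, lintegral_congr hcomp, lintegral_prod _ hprod_meas.aemeasurable,
      lintegral_prod _ (Measurable.lintegral_prod_right'
        (f := fun q : ((Fin d → ℝ) × (Fin d → ℝ)) × (Fin d → ℝ) =>
          ∏ i, e i (q.1.1 i) (q.1.2 i) (q.2 i)) hprod_meas).aemeasurable]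
  have hz : ∀ x y : Fin d → ℝ, ∫⁻ z, ∏ i, e i (x i) (y i) (z i) ∂G0
      = ∏ i, ∫⁻ c, e i (x i) (y i) c ∂(gaussianReal 0 1) := by
    intro x y
    rw [hG0]
    unfold gaussianPi
    exact lintegral_pi_prod d _ (fun i => inferInstance)
      (fun i c => e i (x i) (y i) c) (fun i => by rw [hedef]; fun_prop)
  have hy : ∀ x : Fin d → ℝ, ∫⁻ y, ∏ i, (∫⁻ c, e i (x i) (y i) c ∂(gaussianReal 0 1)) ∂G0
      = ∏ i, ∫⁻ b, ∫⁻ c, e i (x i) b c ∂(gaussianReal 0 1) ∂(gaussianReal 0 1) := by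
    intro x
    rw [hG0]
    unfold gaussianPi
    refine lintegral_pi_prod d _ (fun i => inferInstance)
      (fun i b => ∫⁻ c, e i (x i) b c ∂(gaussianReal 0 1)) (fun i => ?_)
    exact Measurable.lintegral_prod_right'
      (f := fun q : ℝ × ℝ => e i (x i) q.1 q.2) (by rw [hedef]; fun_prop)
  have hx : ∫⁻ x, ∏ i, (∫⁻ b, ∫⁻ c, e i (x i) b c
        ∂(gaussianReal 0 1) ∂(gaussianReal 0 1)) ∂G0
      = ∏ i, ∫⁻ a, ∫⁻ b, ∫⁻ c, e i a b c
        ∂(gaussianReal 0 1) ∂(gaussianReal 0 1) ∂(gaussianReal 0 1) := by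
    rw [hG0]
    unfold gaussianPi
    refine lintegral_pi_prod d _ (fun i => inferInstance)
      (fun i a => ∫⁻ b, ∫⁻ c, e i a b c ∂(gaussianReal 0 1) ∂(gaussianReal 0 1)) (fun i => ?_)
    refine Measurable.lintegral_prod_right'
      (f := fun q : ℝ × ℝ => ∫⁻ c, e i q.1 q.2 c ∂(gaussianReal 0 1)) ?_
    exact Measurable.lintegral_prod_right'
      (f := fun q : (ℝ × ℝ) × ℝ => e i q.1.1 q.1.2 q.2) (by rw [hedef]; fun_prop)
  have hcoord : ∀ i, ∫⁻ a, ∫⁻ b, ∫⁻ c, e i a b c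
        ∂(gaussianReal 0 1) ∂(gaussianReal 0 1) ∂(gaussianReal 0 1)
      = ENNReal.ofReal (Real.exp (-(l*(1-4*l)*(Δ i)^2/(1-12*l^2))) / Real.sqrt (1-12*l^2)) := by
    intro i
    rw [hedef]
    exact coordMGF hl0 hl8
  have hsumeq : ∑ i, -(l*(1-4*l)*(Δ i)^2/(1-12*l^2)) = -(l*(1-4*l)*s/(1-12*l^2)) := by
    rw [hsdef, Finset.mul_sum, Finset.sum_div, ← Finset.sum_neg_distrib]
  have hprodval : ∏ i, ENNReal.ofReal
        (Real.exp (-(l*(1-4*l)*(Δ i)^2/(1-12*l^2))) / Real.sqrt (1-12*l^2))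
      = ENNReal.ofReal (Real.exp (-(l*(1-4*l)*s/(1-12*l^2))) / Real.sqrt (1-12*l^2) ^ d) := by
    rw [← ENNReal.ofReal_prod_of_nonneg (fun i _ => by positivity)]
    congr 1
    rw [Finset.prod_div_distrib, ← Real.exp_sum, Finset.prod_const, Finset.card_univ,
      Fintype.card_fin, hsumeq]
  refine ENNReal.toReal_le_of_le_ofReal (by positivity) ?_
  calc Q S ≤ ∫⁻ p, F p ∂Q := hmarkov
    _ = ∏ i, ∫⁻ a, ∫⁻ b, ∫⁻ c, e i a b c
        ∂(gaussianReal 0 1) ∂(gaussianReal 0 1) ∂(gaussianReal 0 1) := by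
      rw [hQint]
      simp_rw [hz, hy]
      exact hx
    _ = ENNReal.ofReal (Real.exp (-(l*(1-4*l)*s/(1-12*l^2))) / Real.sqrt (1-12*l^2) ^ d) := by
      rw [Finset.prod_congr rfl (fun i _ => hcoord i), hprodval]
    _ ≤ ENNReal.ofReal (Real.exp (-s/64) + 2*Real.exp (-s^2/(256*d))) :=
      ENNReal.ofReal_le_ofReal hfin
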